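/- For ADAPD-OG iterates, if η < 1/L, then for all k ≥ 0: L_η(X^{k+1}, X0^k; Y^k, Z^k) − L_η(X^k, X0^k; Y^k, Z^k) ≤ ((Lη − 1)/(2η)) ‖X^{k+1} − X^k‖_F². -/

import Mathlib

open Matrix Finset

attribute [local instance] Matrix.frobeniusNormedAddCommGroup Matrix.frobeniusNormedSpace

noncomputable section

variable {N p : ℕ}

/-- Frobenius inner product on `N × p` real matrices. -/
def frobInner (A B : Matrix (Fin N) (Fin p) ℝ) : ℝ := ∑ i, ∑ j, A i j * B i j

/-- Squared Frobenius norm. -/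
def frobSq (A : Matrix (Fin N) (Fin p) ℝ) : ℝ := frobInner A A

/-- Frobenius norm. -/
def frobNorm (A : Matrix (Fin N) (Fin p) ℝ) : ℝ := Real.sqrt (frobInner A A)

/-- The continuous linear functional `H ↦ ⟨G, H⟩_F`. -/
def frobCLM (G : Matrix (Fin N) (Fin p) ℝ) : Matrix (Fin N) (Fin p) ℝ →L[ℝ] ℝ :=
  LinearMap.toContinuousLinearMap
    { toFun := fun H => frobInner G H
      map_add' := by
        intro x y
        simp [frobInner, Matrix.add_apply, mul_add, Finset.sum_add_distrib]
      map_smul' := by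
        intro c x
        simp [frobInner, Matrix.smul_apply, Finset.mul_sum]
        ring_nf
        apply Finset.sum_congr rfl; intro i _
        apply Finset.sum_congr rfl; intro j _; ring }

/-- Spectral norm (operator 2-norm) of a square real matrix. -/
def specNorm {N : ℕ} (M : Matrix (Fin N) (Fin N) ℝ) : ℝ :=
  ‖Matrix.toEuclideanCLM (𝕜 := ℝ) M‖

/-- The all-ones `N × N` matrix. -/
def onesMat (N : ℕ) : Matrix (Fin N) (Fin N) ℝ := fun _ _ => 1

/-- Quadratic form `‖A‖_M² := ⟨A, M A⟩_F` for a symmetric `M` (possibly negative). -/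
def quadForm (M : Matrix (Fin N) (Fin N) ℝ) (A : Matrix (Fin N) (Fin p) ℝ) : ℝ :=
  frobInner A (M * A)

/-- Augmented Lagrangian `L_η(X, X0; Y, Z)`, where `S` plays the role of `√(I−W)`. -/
def Lag (F : Matrix (Fin N) (Fin p) ℝ → ℝ) (S : Matrix (Fin N) (Fin N) ℝ) (η : ℝ)
    (X X0 Y Z : Matrix (Fin N) (Fin p) ℝ) : ℝ :=
  F X + frobInner Y (X - X0) + (2*η)⁻¹ * frobSq (X - X0)
    + frobInner Z (S * X0) + (2*η)⁻¹ * frobSq (S * X0)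


lemma frobSq_nonneg' (A : Matrix (Fin N) (Fin p) ℝ) : 0 ≤ frobSq A := by
  unfold frobSq frobInner
  apply Finset.sum_nonneg; intro i _; apply Finset.sum_nonneg; intro j _
  exact mul_self_nonneg _

lemma frobNorm_sq' (A : Matrix (Fin N) (Fin p) ℝ) : frobNorm A ^ 2 = frobSq A := by
  rw [frobNorm]; exact Real.sq_sqrt (frobSq_nonneg' A)

lemma frobInner_le' (A B : Matrix (Fin N) (Fin p) ℝ) :
    frobInner A B ≤ frobNorm A * frobNorm B := by
  have h1 : frobInner A B = ∑ ij : Fin N × Fin p, A ij.1 ij.2 * B ij.1 ij.2 := by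
    rw [frobInner]; exact (Fintype.sum_prod_type (f := fun ij : Fin N × Fin p => A ij.1 ij.2 * B ij.1 ij.2)).symm
  have h2 : frobSq A = ∑ ij : Fin N × Fin p, (A ij.1 ij.2) ^ 2 := by
    rw [frobSq, frobInner]
    rw [show ∑ ij : Fin N × Fin p, (A ij.1 ij.2) ^ 2 = ∑ i, ∑ j, (A i j)^2 from
      Fintype.sum_prod_type (f := fun ij : Fin N × Fin p => (A ij.1 ij.2) ^ 2)]
    simp [sq]
  have h3 : frobSq B = ∑ ij : Fin N × Fin p, (B ij.1 ij.2) ^ 2 := by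
    rw [frobSq, frobInner]
    rw [show ∑ ij : Fin N × Fin p, (B ij.1 ij.2) ^ 2 = ∑ i, ∑ j, (B i j)^2 from
      Fintype.sum_prod_type (f := fun ij : Fin N × Fin p => (B ij.1 ij.2) ^ 2)]
    simp [sq]
  have cs := Finset.sum_mul_sq_le_sq_mul_sq Finset.univ
    (fun ij : Fin N × Fin p => A ij.1 ij.2) (fun ij => B ij.1 ij.2)
  calc frobInner A B ≤ |frobInner A B| := le_abs_self _
    _ = Real.sqrt ((frobInner A B) ^ 2) := (Real.sqrt_sq_eq_abs _).symm
    _ ≤ Real.sqrt (frobSq A * frobSq B) := by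
        apply Real.sqrt_le_sqrt; rw [h1, h2, h3]; exact cs
    _ = frobNorm A * frobNorm B := by
        rw [Real.sqrt_mul (frobSq_nonneg' A)]; rfl

lemma frobNorm_nonneg' (A : Matrix (Fin N) (Fin p) ℝ) : 0 ≤ frobNorm A := Real.sqrt_nonneg _

lemma frobNorm_smul' (c : ℝ) (A : Matrix (Fin N) (Fin p) ℝ) :
    frobNorm (c • A) = |c| * frobNorm A := by
  unfold frobNorm frobInner
  simp only [Matrix.smul_apply, smul_eq_mul]
  have h : ∀ i : Fin N, ∀ j : Fin p, c * A i j * (c * A i j) = c ^ 2 * (A i j * A i j) :=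
    fun i j => by ring
  simp_rw [h, ← Finset.mul_sum]
  rw [Real.sqrt_mul (sq_nonneg c), Real.sqrt_sq_eq_abs]

lemma frobInner_sub_left' (A B C : Matrix (Fin N) (Fin p) ℝ) :
    frobInner (A - B) C = frobInner A C - frobInner B C := by
  unfold frobInner
  simp_rw [Matrix.sub_apply, sub_mul, Finset.sum_sub_distrib]

lemma frobInner_sub_right' (A B C : Matrix (Fin N) (Fin p) ℝ) :
    frobInner A (B - C) = frobInner A B - frobInner A C := by
  unfold frobInner
  simp_rw [Matrix.sub_apply, mul_sub, Finset.sum_sub_distrib]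

lemma frobInner_add_left' (A B C : Matrix (Fin N) (Fin p) ℝ) :
    frobInner (A + B) C = frobInner A C + frobInner B C := by
  unfold frobInner
  simp_rw [Matrix.add_apply, add_mul, Finset.sum_add_distrib]

lemma frobInner_smul_left' (c : ℝ) (A B : Matrix (Fin N) (Fin p) ℝ) :
    frobInner (c • A) B = c * frobInner A B := by
  unfold frobInner
  simp_rw [Matrix.smul_apply, smul_eq_mul, mul_assoc, ← Finset.mul_sum]

lemma frobSq_sub' (A D : Matrix (Fin N) (Fin p) ℝ) :
    frobSq (A - D) = frobSq A - 2 * frobInner A D + frobSq D := by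
  unfold frobSq frobInner
  have h : ∀ i : Fin N, ∀ j : Fin p, (A - D) i j * (A - D) i j
      = A i j * A i j - 2 * (A i j * D i j) + D i j * D i j := by
    intro i j; simp [Matrix.sub_apply]; ring
  simp_rw [h, Finset.sum_add_distrib, Finset.sum_sub_distrib, ← Finset.mul_sum]

lemma frobCLM_apply' (G A : Matrix (Fin N) (Fin p) ℝ) : frobCLM G A = frobInner G A := rfl

lemma descent_lemma' {L : ℝ} (F : Matrix (Fin N) (Fin p) ℝ → ℝ)
    (G : Matrix (Fin N) (Fin p) ℝ → Matrix (Fin N) (Fin p) ℝ)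
    (hgrad : ∀ U, HasFDerivAt F (frobCLM (G U)) U)
    (hLip : ∀ U V, frobNorm (G U - G V) ≤ L * frobNorm (U - V))
    (x d : Matrix (Fin N) (Fin p) ℝ) :
    F (x + d) ≤ F x + frobInner (G x) d + L / 2 * frobSq d := by
  set g : ℝ → ℝ := fun t => F (x + t • d) with hg_def
  have hg : ∀ t : ℝ, HasDerivAt g (frobInner (G (x + t • d)) d) t := by
    intro t
    have hline : HasDerivAt (fun t : ℝ => x + t • d) d t := by
      have h0 := ((hasDerivAt_id' t).smul_const d).const_add x
      rwa [one_smul] at h0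
    have := (hgrad (x + t • d)).comp_hasDerivAt t hline
    exact this
  set c1 : ℝ := frobInner (G x) d with hc1
  set c2 : ℝ := L / 2 * frobSq d with hc2
  set h : ℝ → ℝ := fun t => g t - g 0 - t * c1 - c2 * t ^ 2 with hh_def
  have hh : ∀ t : ℝ, HasDerivAt h (frobInner (G (x + t • d)) d - c1 - c2 * (2 * t)) t := by
    intro t
    have h1 := (hg t).sub_const (g 0)
    have h2 : HasDerivAt (fun t : ℝ => t * c1) c1 t := by
      simpa using (hasDerivAt_id t).mul_const c1
    have h3 : HasDerivAt (fun t : ℝ => c2 * t ^ 2) (c2 * (2 * t)) t := by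
      simpa [mul_comm, mul_assoc] using (hasDerivAt_pow 2 t).const_mul c2
    exact (h1.sub h2).sub h3
  have hanti : AntitoneOn h (Set.Icc (0:ℝ) 1) := by
    apply antitoneOn_of_deriv_nonpos (convex_Icc 0 1)
    · exact fun t _ => ((hh t).continuousAt).continuousWithinAt
    · exact fun t _ => ((hh t).differentiableAt).differentiableWithinAt
    · intro t ht
      rw [interior_Icc] at ht
      rw [(hh t).deriv]
      have hb : frobInner (G (x + t • d)) d - c1 ≤ c2 * (2 * t) := by
        rw [hc1, ← frobInner_sub_left']
        calc frobInner (G (x + t • d) - G x) d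
            ≤ frobNorm (G (x + t • d) - G x) * frobNorm d := frobInner_le' _ _
          _ ≤ L * frobNorm (x + t • d - x) * frobNorm d := by
              apply mul_le_mul_of_nonneg_right _ (frobNorm_nonneg' d)
              exact hLip _ _
          _ = c2 * (2 * t) := by
              have he : x + t • d - x = t • d := by abel
              rw [he, frobNorm_smul', abs_of_nonneg ht.1.le, hc2, ← frobNorm_sq']
              ring
      linarith
  have h10 : h 1 ≤ h 0 := hanti (by norm_num) (by norm_num) zero_le_one
  have h0 : h 0 = 0 := by simp [hh_def]
  have h1 : h 1 = F (x + d) - F x - c1 - c2 := by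
    simp [hh_def, hg_def]
  rw [h0, h1] at h10
  linarith

/-- Lemma: descent in the one-gradient `X`-update of ADAPD-OG. -/
theorem adapd_og_x_decrease (N p : ℕ) (hN : 0 < N) (hp : 0 < p)
    -- mixing matrix assumptions
    (W : Matrix (Fin N) (Fin N) ℝ) (hWsym : Wᵀ = W)
    (hWub : Matrix.PosSemidef (1 - W)) (hWlb : Matrix.PosDef (1 + W))
    (hWnull : ∀ v : Fin N → ℝ, (1 - W).mulVec v = 0 ↔ ∃ c : ℝ, v = fun _ => c)
    (ρ : ℝ) (hρdef : ρ = specNorm (W - (N:ℝ)⁻¹ • onesMat N)) (hρlt : ρ < 1)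
    -- `S` is the unique positive semidefinite square root of `I − W`
    (S : Matrix (Fin N) (Fin N) ℝ) (hSpsd : S.PosSemidef) (hSsq : S * S = 1 - W)
    -- objective: `F` is `L`-smooth (gradient `G` w.r.t. the Frobenius inner product)
    -- and bounded below by `flb`
    (L flb : ℝ) (hL : 0 < L)
    (F : Matrix (Fin N) (Fin p) ℝ → ℝ)
    (G : Matrix (Fin N) (Fin p) ℝ → Matrix (Fin N) (Fin p) ℝ)
    (hgrad : ∀ U, HasFDerivAt F (frobCLM (G U)) U)
    (hLip : ∀ U V, frobNorm (G U - G V) ≤ L * frobNorm (U - V))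
    (hlb : ∀ U, flb ≤ F U)
    -- ADAPD-OG iterates with parameter `η`
    (η : ℝ) (hη : 0 < η)
    (X X0 Y Z : ℕ → Matrix (Fin N) (Fin p) ℝ)
    (hZ0 : ∃ U0 : Matrix (Fin N) (Fin p) ℝ, Z 0 = S * U0)
    (hY0 : Y 0 = - G (X 0))
    (hXit : ∀ k, X (k+1) = X0 k - η • (G (X k) + Y k))
    (hX0it : ∀ k, X0 (k+1) = (2:ℝ)⁻¹ • (W * X0 k + X (k+1) + η • (Y k - S * Z k)))
    (hYit : ∀ k, Y (k+1) = Y k + η⁻¹ • (X (k+1) - X0 (k+1)))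
    (hZit : ∀ k, Z (k+1) = Z k + η⁻¹ • (S * X0 (k+1)))
    (hη1 : η < 1/L) :
    ∀ k : ℕ,
      Lag F S η (X (k+1)) (X0 k) (Y k) (Z k) - Lag F S η (X k) (X0 k) (Y k) (Z k)
        ≤ (L*η - 1)/(2*η) * frobSq (X (k+1) - X k) := by

  intro k
  set x := X k with hx
  set x' := X (k+1) with hx'
  set x0 := X0 k with hx0
  set y := Y k with hy
  set z := Z k with hz
  set d := x' - x with hd_def
  have hηne : η ≠ 0 := ne_of_gt hη
  have hxd : x + d = x' := by rw [hd_def]; abel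
  have hstep : x' = x0 - η • (G x + y) := hXit k
  have e1 : x - x0 = (x' - x0) - d := by rw [hd_def]; abel
  have e4 : frobInner (x' - x0) d = -η * (frobInner (G x) d + frobInner y d) := by
    have hss : x' - x0 = (-η) • (G x + y) := by
      rw [hstep, neg_smul]; abel
    rw [hss, frobInner_smul_left', frobInner_add_left']
  have key : Lag F S η x' x0 y z - Lag F S η x x0 y z
      = F x' - F x - frobInner (G x) d - (2*η)⁻¹ * frobSq d := by
    have e2 : frobInner y (x - x0) = frobInner y (x' - x0) - frobInner y d := by
      rw [e1]; exact frobInner_sub_right' y (x' - x0) d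
    have e3 : frobSq (x - x0) = frobSq (x' - x0) - 2 * frobInner (x' - x0) d + frobSq d := by
      rw [e1]; exact frobSq_sub' (x' - x0) d
    unfold Lag
    rw [e2, e3, e4]
    field_simp
    ring
  have hdesc := descent_lemma' F G hgrad hLip x d
  rw [hxd] at hdesc
  have hco : (L*η - 1)/(2*η) * frobSq d = L/2 * frobSq d - (2*η)⁻¹ * frobSq d := by
    field_simp
  rw [key, hco]
  linarith


end
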